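/- Suppose V : ℝ^d → ℝ satisfies V(x) − V(x*) ≤ L·|x − x*|^β for all x, where x* is a global minimizer, β ∈ (0,1), L > 0. Let p_η^{(1)}(x) = (Γ((d+1)/2)/π^{(d+1)/2})·η·(|x|² + η²)^{-(d+1)/2} be the d-dimensional Cauchy density with scale η. Then ∫ (V(x+y) − V(x*)) p_η^{(1)}(x) dx ≤ L|y − x*|^β + (Γ((d+1)/2)Γ((1−β)/2)/(Γ((d+1−β)/2)√π))·L·η^β for every y ∈ ℝ^d. -/

import Mathlib

open MeasureTheory Real Set

/-- d-dimensional Cauchy density with scale `η`. -/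
noncomputable def cauchyDensity (d : ℕ) (η : ℝ) (x : EuclideanSpace ℝ (Fin d)) : ℝ :=
  (Real.Gamma (((d : ℝ) + 1) / 2) / Real.pi ^ (((d : ℝ) + 1) / 2)) * η *
    (‖x‖ ^ 2 + η ^ 2) ^ (-(((d : ℝ) + 1) / 2))

lemma rpow_add_le' (a b p : ℝ) (ha : 0 ≤ a) (hb : 0 ≤ b) (hp0 : 0 ≤ p) (hp1 : p ≤ 1) :
    (a + b) ^ p ≤ a ^ p + b ^ p := by
  have h := NNReal.rpow_add_le_add_rpow a.toNNReal b.toNNReal hp0 hp1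
  have := NNReal.coe_le_coe.2 h
  push_cast at this
  rwa [Real.coe_toNNReal _ ha, Real.coe_toNNReal _ hb] at this

lemma gamma_prod_le (a β : ℝ) (ha : 0 < a) (hβ0 : 0 ≤ β) (hβ1 : β ≤ 1) :
    Real.Gamma (a + β / 2) * Real.Gamma (a + 1 / 2 - β / 2) ≤
      Real.Gamma a * Real.Gamma (a + 1 / 2) := by
  have hcv := Real.convexOn_log_Gamma
  have hmem1 : a ∈ Ioi (0:ℝ) := ha
  have hmem2 : a + 1/2 ∈ Ioi (0:ℝ) := by simp only [mem_Ioi]; linarith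
  have h1 := hcv.2 hmem1 hmem2 (by linarith : (0:ℝ) ≤ 1 - β) hβ0 (by ring)
  have h2 := hcv.2 hmem1 hmem2 hβ0 (by linarith : (0:ℝ) ≤ 1 - β) (by ring)
  simp only [smul_eq_mul, Function.comp_apply] at h1 h2
  have e1 : (1 - β) * a + β * (a + 1/2) = a + β/2 := by ring
  have e2 : β * a + (1 - β) * (a + 1/2) = a + 1/2 - β/2 := by ring
  rw [e1] at h1; rw [e2] at h2
  have hsum : Real.log (Real.Gamma (a + β/2)) + Real.log (Real.Gamma (a + 1/2 - β/2)) ≤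
      Real.log (Real.Gamma a) + Real.log (Real.Gamma (a + 1/2)) := by linarith
  have g1 : 0 < Real.Gamma (a + β/2) := Real.Gamma_pos_of_pos (by linarith)
  have g2 : 0 < Real.Gamma (a + 1/2 - β/2) := Real.Gamma_pos_of_pos (by linarith)
  have g3 : 0 < Real.Gamma a := Real.Gamma_pos_of_pos ha
  have g4 : 0 < Real.Gamma (a + 1/2) := Real.Gamma_pos_of_pos (by linarith)
  rw [← Real.log_mul g1.ne' g2.ne', ← Real.log_mul g3.ne' g4.ne'] at hsum
  exact (Real.log_le_log_iff (by positivity) (by positivity)).1 hsum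

lemma gamma_scaled (c b : ℝ) (hc : 0 < c) (hb : 0 < b) :
    ∫ t in Ioi (0:ℝ), t ^ (c - 1) * Real.exp (-(b * t)) = b ^ (-c) * Real.Gamma c := by
  have h := integral_rpow_mul_exp_neg_mul_rpow (p := 1) (q := c - 1) (b := b)
    one_pos (by linarith) hb
  simp only [Real.rpow_one] at h
  rw [show ∫ t in Ioi (0:ℝ), t ^ (c - 1) * Real.exp (-(b * t))
      = ∫ t in Ioi (0:ℝ), t ^ (c - 1) * Real.exp (-b * t) by
    refine setIntegral_congr_fun measurableSet_Ioi fun t ht => ?_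
    rw [neg_mul], h]
  rw [show c - 1 + 1 = c by ring]
  ring_nf

lemma gamma_scaled_integrable (c b : ℝ) (hc : 0 < c) (hb : 0 < b) :
    IntegrableOn (fun t : ℝ => t ^ (c - 1) * Real.exp (-(b * t))) (Ioi 0) := by
  have h := integrableOn_rpow_mul_exp_neg_mul_rpow (p := 1) (s := c - 1) (b := b)
    (by linarith) one_pos hb
  refine h.congr_fun (fun t ht => ?_) measurableSet_Ioi
  beta_reduce
  rw [Real.rpow_one, neg_mul]

lemma radial_integrable (d : ℕ) (hd : 1 ≤ d) (s η : ℝ) (hs0 : 0 ≤ s) (hs1 : s < 1) (hη : 0 < η) :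
    IntegrableOn (fun r : ℝ => r ^ ((d:ℝ) - 1 + s) * (r ^ 2 + η ^ 2) ^ (-(((d:ℝ) + 1) / 2)))
      (Ioi 0) := by
  have hd1 : (1:ℝ) ≤ (d:ℝ) := by exact_mod_cast hd
  set q : ℝ := (d:ℝ) - 1 + s with hq_def
  set c : ℝ := ((d:ℝ) + 1) / 2 with hc_def
  have hq0 : 0 ≤ q := by simp [hq_def]; linarith
  have hc0 : (0:ℝ) < c := by simp [hc_def]; linarith
  have hmeas : Measurable fun r : ℝ => r ^ q * (r ^ 2 + η ^ 2) ^ (-c) := by fun_prop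
  have h1 : IntegrableOn (fun r : ℝ => r ^ q * (r ^ 2 + η ^ 2) ^ (-c)) (Ioc 0 1) := by
    have hint : IntegrableOn (fun r : ℝ => r ^ q) (Ioc (0:ℝ) 1) :=
      (intervalIntegral.intervalIntegrable_rpow' (by linarith)).1
    refine ((hint.const_mul ((η^2) ^ (-c))).mono' hmeas.aestronglyMeasurable ?_)
    filter_upwards [ae_restrict_mem measurableSet_Ioc] with r hr
    have hr0 : 0 < r := hr.1
    have hb : (0:ℝ) < η ^ 2 := by positivity
    have hant : (r ^ 2 + η ^ 2) ^ (-c) ≤ (η ^ 2) ^ (-c) := by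
      rw [Real.rpow_neg (by positivity), Real.rpow_neg hb.le]
      exact inv_anti₀ (Real.rpow_pos_of_pos hb c)
        (Real.rpow_le_rpow hb.le (by nlinarith) hc0.le)
    rw [Real.norm_of_nonneg (by positivity)]
    calc r ^ q * (r ^ 2 + η ^ 2) ^ (-c) ≤ r ^ q * (η ^ 2) ^ (-c) :=
          mul_le_mul_of_nonneg_left hant (by positivity)
      _ = (η ^ 2) ^ (-c) * r ^ q := by ring
  have h2 : IntegrableOn (fun r : ℝ => r ^ q * (r ^ 2 + η ^ 2) ^ (-c)) (Ioi 1) := by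
    have hint : IntegrableOn (fun r : ℝ => r ^ (q - 2*c)) (Ioi (1:ℝ)) :=
      integrableOn_Ioi_rpow_of_lt (by simp [hq_def, hc_def]; linarith) one_pos
    refine hint.mono' hmeas.aestronglyMeasurable ?_
    filter_upwards [ae_restrict_mem measurableSet_Ioi] with r hr
    have hr0 : (0:ℝ) < r := lt_trans one_pos hr
    rw [Real.norm_of_nonneg (by positivity)]
    have hant : (r ^ 2 + η ^ 2) ^ (-c) ≤ (r ^ 2) ^ (-c) := by
      rw [Real.rpow_neg (by positivity), Real.rpow_neg (by positivity)]
      exact inv_anti₀ (Real.rpow_pos_of_pos (by positivity) c)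
        (Real.rpow_le_rpow (by positivity) (by nlinarith) hc0.le)
    calc r ^ q * (r ^ 2 + η ^ 2) ^ (-c) ≤ r ^ q * (r ^ 2) ^ (-c) :=
          mul_le_mul_of_nonneg_left hant (by positivity)
      _ = r ^ (q - 2*c) := by
          rw [← Real.rpow_natCast r 2, ← Real.rpow_mul hr0.le, ← Real.rpow_add hr0]
          norm_num; ring_nf
  have := h1.union h2
  rwa [Ioc_union_Ioi_eq_Ioi zero_le_one] at this

lemma radial_integral (d : ℕ) (hd : 1 ≤ d) (s η : ℝ) (hs0 : 0 ≤ s) (hs1 : s < 1) (hη : 0 < η) :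
    ∫ r in Ioi (0:ℝ), r ^ ((d:ℝ) - 1 + s) * (r ^ 2 + η ^ 2) ^ (-(((d:ℝ) + 1) / 2)) =
      η ^ (s - 1) * (Real.Gamma (((d:ℝ) + s) / 2) * Real.Gamma ((1 - s) / 2)) /
        (2 * Real.Gamma (((d:ℝ) + 1) / 2)) := by
  have hd1 : (1:ℝ) ≤ (d:ℝ) := by exact_mod_cast hd
  set q : ℝ := (d:ℝ) - 1 + s with hq_def
  set c : ℝ := ((d:ℝ) + 1) / 2 with hc_def
  have hq0 : 0 ≤ q := by simp [hq_def]; linarith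
  have hc0 : (0:ℝ) < c := by simp [hc_def]; linarith
  have hΓc : (0:ℝ) < Real.Gamma c := Real.Gamma_pos_of_pos hc0
  set F : ℝ → ℝ → ℝ := fun r t => r ^ q * (t ^ (c - 1) * Real.exp (-((r ^ 2 + η ^ 2) * t)))
    with hF_def
  -- inner t-integral
  have inner_t : ∀ r : ℝ, ∫ t in Ioi (0:ℝ), F r t
      = Real.Gamma c * (r ^ q * (r ^ 2 + η ^ 2) ^ (-c)) := by
    intro r
    have hb : (0:ℝ) < r ^ 2 + η ^ 2 := by positivity
    rw [MeasureTheory.integral_const_mul, gamma_scaled c _ hc0 hb]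
    ring
  have int_t : ∀ r : ℝ, Integrable (F r) (volume.restrict (Ioi 0)) := fun r =>
    (gamma_scaled_integrable c _ hc0 (by positivity)).const_mul _
  have hFm : Measurable (Function.uncurry F) := by
    simp only [hF_def, Function.uncurry]
    fun_prop
  -- integrability on the product
  have hprod : Integrable (Function.uncurry F)
      ((volume.restrict (Ioi (0:ℝ))).prod (volume.restrict (Ioi (0:ℝ)))) := by
    rw [MeasureTheory.integrable_prod_iff hFm.aestronglyMeasurable]
    refine ⟨Filter.Eventually.of_forall fun r => int_t r, ?_⟩
    have key : (fun r : ℝ => Real.Gamma c * (r ^ q * (r ^ 2 + η ^ 2) ^ (-c)))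
        =ᵐ[volume.restrict (Ioi (0:ℝ))] fun r => ∫ t in Ioi (0:ℝ), ‖F r t‖ := by
      filter_upwards [ae_restrict_mem measurableSet_Ioi] with r hr
      rw [← inner_t r]
      refine setIntegral_congr_fun measurableSet_Ioi fun t ht => ?_
      rw [Real.norm_of_nonneg]
      have : (0:ℝ) ≤ r ^ q := Real.rpow_nonneg (le_of_lt hr) q
      have : (0:ℝ) ≤ t ^ (c-1) := Real.rpow_nonneg (le_of_lt ht) _
      positivity
    exact (((radial_integrable d hd s η hs0 hs1 hη).const_mul (Real.Gamma c)).congr key)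
  -- swap
  have hswap : ∫ r in Ioi (0:ℝ), ∫ t in Ioi (0:ℝ), F r t
      = ∫ t in Ioi (0:ℝ), ∫ r in Ioi (0:ℝ), F r t := integral_integral_swap hprod
  -- inner r-integral
  have inner_r : ∀ t ∈ Ioi (0:ℝ), ∫ r in Ioi (0:ℝ), F r t
      = (t ^ (c - 1) * Real.exp (-(η ^ 2 * t))) *
        (t ^ (-(q + 1) / 2) * (1 / 2) * Real.Gamma ((q + 1) / 2)) := by
    intro t ht
    have htr : ∫ r in Ioi (0:ℝ), F r t
        = ∫ r in Ioi (0:ℝ), (t ^ (c - 1) * Real.exp (-(η ^ 2 * t))) *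
            (r ^ q * Real.exp (-t * r ^ (2:ℝ))) := by
      refine setIntegral_congr_fun measurableSet_Ioi fun r hr => ?_
      have h2 : r ^ (2:ℝ) = r ^ (2:ℕ) := by
        rw [← Real.rpow_natCast r 2]; norm_num
      simp only [hF_def, h2]
      rw [show -((r ^ 2 + η ^ 2) * t) = -(η^2*t) + -t * r ^ (2:ℕ) by push_cast; ring,
        Real.exp_add]
      ring
    rw [htr, MeasureTheory.integral_const_mul,
      integral_rpow_mul_exp_neg_mul_rpow two_pos (by linarith) (mem_Ioi.mp ht)]
  have outer : ∫ t in Ioi (0:ℝ), ∫ r in Ioi (0:ℝ), F r t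
      = Real.Gamma ((q + 1) / 2) * (1 / 2) *
        ((η ^ 2) ^ (-((1 - s) / 2)) * Real.Gamma ((1 - s) / 2)) := by
    rw [setIntegral_congr_fun measurableSet_Ioi inner_r]
    have : ∀ t ∈ Ioi (0:ℝ),
        (t ^ (c - 1) * Real.exp (-(η ^ 2 * t))) *
          (t ^ (-(q + 1) / 2) * (1 / 2) * Real.Gamma ((q + 1) / 2))
        = (Real.Gamma ((q + 1) / 2) * (1 / 2)) *
            (t ^ ((1 - s) / 2 - 1) * Real.exp (-(η ^ 2 * t))) := by
      intro t ht
      have ht0 : (0:ℝ) < t := ht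
      rw [show (1 - s) / 2 - 1 = (c - 1) + (-(q+1)/2) by simp [hc_def, hq_def]; ring,
        Real.rpow_add ht0]
      ring
    rw [setIntegral_congr_fun measurableSet_Ioi this, MeasureTheory.integral_const_mul,
      gamma_scaled ((1-s)/2) (η^2) (by linarith) (by positivity)]
  -- put together
  have main : Real.Gamma c * ∫ r in Ioi (0:ℝ), r ^ q * (r ^ 2 + η ^ 2) ^ (-c)
      = Real.Gamma ((q + 1) / 2) * (1 / 2) *
        ((η ^ 2) ^ (-((1 - s) / 2)) * Real.Gamma ((1 - s) / 2)) := by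
    rw [← MeasureTheory.integral_const_mul, ← outer, ← hswap]
    exact setIntegral_congr_fun measurableSet_Ioi fun r _ => (inner_t r).symm
  have hq1 : (q + 1) / 2 = ((d:ℝ) + s) / 2 := by simp [hq_def]; ring
  have hηs : (η ^ 2) ^ (-((1 - s) / 2)) = η ^ (s - 1) := by
    rw [← Real.rpow_natCast η 2, ← Real.rpow_mul hη.le]
    norm_num
    congr 1
    ring
  rw [hq1, hηs] at main
  have := hΓc.ne'
  field_simp at main ⊢
  linarith [main]

lemma moment_eq (d : ℕ) (hd : 1 ≤ d) (s η : ℝ) (hs0 : 0 ≤ s) (hs1 : s < 1) (hη : 0 < η) :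
    ∫ x : EuclideanSpace ℝ (Fin d), ‖x‖ ^ s * cauchyDensity d η x =
      Real.Gamma (((d:ℝ) + s) / 2) * Real.Gamma ((1 - s) / 2) /
        (Real.Gamma ((d:ℝ) / 2) * Real.sqrt Real.pi) * η ^ s := by
  have hd1 : (1:ℝ) ≤ (d:ℝ) := by exact_mod_cast hd
  haveI : Nonempty (Fin d) := ⟨⟨0, hd⟩⟩
  haveI : Nontrivial (EuclideanSpace ℝ (Fin d)) := by
    refine nontrivial_of_ne (EuclideanSpace.single ⟨0, hd⟩ (1:ℝ)) 0 ?_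
    intro h
    have := congrArg (fun v : EuclideanSpace ℝ (Fin d) => v ⟨0, hd⟩) h
    simp [EuclideanSpace.single] at this
  set c : ℝ := ((d:ℝ) + 1) / 2 with hc_def
  set A : ℝ := Real.Gamma c / Real.pi ^ c with hA_def
  set f : ℝ → ℝ := fun r => r ^ s * (A * η * (r ^ 2 + η ^ 2) ^ (-c)) with hf_def
  have lhs_eq : ∫ x : EuclideanSpace ℝ (Fin d), ‖x‖ ^ s * cauchyDensity d η x
      = ∫ x : EuclideanSpace ℝ (Fin d), f ‖x‖ := rfl
  rw [lhs_eq, MeasureTheory.integral_fun_norm_addHaar volume f]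
  rw [finrank_euclideanSpace_fin]
  have hball : ((volume (Metric.ball (0 : EuclideanSpace ℝ (Fin d)) 1)).toReal : ℝ)
      = Real.sqrt π ^ d / Real.Gamma ((d:ℝ) / 2 + 1) := by
    rw [EuclideanSpace.volume_ball, Fintype.card_fin]
    have h0 : (0:ℝ) ≤ Real.sqrt π ^ d / Real.Gamma ((d:ℝ) / 2 + 1) := by
      have := Real.Gamma_pos_of_pos (show (0:ℝ) < (d:ℝ)/2 + 1 by linarith)
      positivity
    rw [ENNReal.ofReal_one, one_pow, one_mul, ENNReal.toReal_ofReal h0]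
  rw [measureReal_def, hball]
  have hinner : ∫ r in Ioi (0:ℝ), r ^ (d - 1) • f r
      = (A * η) * (η ^ (s - 1) * (Real.Gamma (((d:ℝ) + s) / 2) * Real.Gamma ((1 - s) / 2)) /
          (2 * Real.Gamma c)) := by
    have : ∀ r ∈ Ioi (0:ℝ), r ^ (d - 1) • f r
        = (A * η) * (r ^ ((d:ℝ) - 1 + s) * (r ^ 2 + η ^ 2) ^ (-c)) := by
      intro r hr
      have hr0 : (0:ℝ) < r := hr
      have hpow : (r : ℝ) ^ (d - 1 : ℕ) = r ^ ((d:ℝ) - 1) := by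
        rw [← Real.rpow_natCast r (d - 1)]
        congr 1
        push_cast [Nat.cast_sub hd]
        ring
      rw [smul_eq_mul, hf_def, hpow, Real.rpow_add hr0]
      ring
    rw [setIntegral_congr_fun measurableSet_Ioi this, MeasureTheory.integral_const_mul,
      radial_integral d hd s η hs0 hs1 hη]
  rw [hinner, nsmul_eq_mul, smul_eq_mul]
  -- now pure arithmetic
  have hsqrtd : (Real.sqrt π : ℝ) ^ d = π ^ ((d:ℝ) / 2) := by
    rw [Real.sqrt_eq_rpow, ← Real.rpow_natCast (π ^ ((1:ℝ)/2)) d, ← Real.rpow_mul pi_pos.le]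
    congr 1; ring
  have hπc : Real.pi ^ c = π ^ ((d:ℝ) / 2) * Real.sqrt π := by
    rw [Real.sqrt_eq_rpow, ← Real.rpow_add pi_pos, hc_def]
    congr 1; ring
  have hγ : Real.Gamma ((d:ℝ) / 2 + 1) = ((d:ℝ) / 2) * Real.Gamma ((d:ℝ) / 2) := by
    rw [Real.Gamma_add_one (by positivity)]
  have hηs : η * η ^ (s - 1) = η ^ s := by
    nth_rewrite 1 [← Real.rpow_one η]
    rw [← Real.rpow_add hη]; norm_num
  have hΓc : Real.Gamma c ≠ 0 := (Real.Gamma_pos_of_pos (by rw [hc_def]; linarith)).ne'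
  have hΓd : Real.Gamma ((d:ℝ)/2) ≠ 0 := (Real.Gamma_pos_of_pos (by positivity)).ne'
  have hsπ : Real.sqrt π ≠ 0 := (Real.sqrt_pos.2 pi_pos).ne'
  have hπd : (π : ℝ) ^ ((d:ℝ)/2) ≠ 0 := (Real.rpow_pos_of_pos pi_pos _).ne'
  have hd0 : (d:ℝ) ≠ 0 := by linarith
  rw [hA_def, hγ, hsqrtd, hπc]
  field_simp
  ring_nf
  rw [mul_comm] at hηs
  rw [← hηs]
  ring

lemma cauchyDensity_nonneg (d : ℕ) (η : ℝ) (hη : 0 < η) (x : EuclideanSpace ℝ (Fin d)) :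
    0 ≤ cauchyDensity d η x := by
  unfold cauchyDensity
  have h1 : 0 < Real.Gamma (((d : ℝ) + 1) / 2) := Real.Gamma_pos_of_pos (by positivity)
  positivity

lemma moment_integrable (d : ℕ) (hd : 1 ≤ d) (s η : ℝ) (hs0 : 0 ≤ s) (hs1 : s < 1) (hη : 0 < η) :
    Integrable (fun x : EuclideanSpace ℝ (Fin d) => ‖x‖ ^ s * cauchyDensity d η x) := by
  have hd1 : (1:ℝ) ≤ (d:ℝ) := by exact_mod_cast hd
  set c : ℝ := ((d:ℝ) + 1) / 2 with hc_def
  have hc0 : (0:ℝ) < c := by rw [hc_def]; linarith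
  set A : ℝ := Real.Gamma c / Real.pi ^ c with hA_def
  have hA0 : 0 < A := by
    have := Real.Gamma_pos_of_pos hc0
    rw [hA_def]; positivity
  set m : ℝ := min 1 (η ^ 2) with hm_def
  have hm0 : 0 < m := by rw [hm_def]; positivity
  set C : ℝ := A * η * (m / 2) ^ (-c) with hC_def
  have hC0 : 0 < C := by
    have : (0:ℝ) < (m / 2) ^ (-c) := Real.rpow_pos_of_pos (by linarith) _
    rw [hC_def]; positivity
  have hkey : ∀ x : EuclideanSpace ℝ (Fin d),
      ‖x‖ ^ s * cauchyDensity d η x ≤ C * (1 + ‖x‖) ^ (-((d:ℝ) + 1 - s)) := by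
    intro x
    set t : ℝ := ‖x‖ with ht_def
    have ht0 : 0 ≤ t := norm_nonneg x
    have h1t : (0:ℝ) < 1 + t := by linarith
    -- (m/2)(1+t)^2 ≤ t^2 + η^2
    have hlow : (m / 2) * (1 + t) ^ 2 ≤ t ^ 2 + η ^ 2 := by
      have hm1 : m ≤ 1 := min_le_left _ _
      have hm2 : m ≤ η ^ 2 := min_le_right _ _
      nlinarith [sq_nonneg (1 - t), sq_nonneg t]
    have hbound : (t ^ 2 + η ^ 2) ^ (-c) ≤ (m / 2) ^ (-c) * (1 + t) ^ (-(2*c)) := by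
      have e1 : ((m / 2) * (1 + t) ^ 2) ^ (-c) = (m / 2) ^ (-c) * (1 + t) ^ (-(2*c)) := by
        rw [Real.mul_rpow (by linarith) (by positivity), ← Real.rpow_natCast (1+t) 2,
          ← Real.rpow_mul h1t.le]
        norm_num
      rw [← e1, Real.rpow_neg (by positivity), Real.rpow_neg (by positivity)]
      refine inv_anti₀ (Real.rpow_pos_of_pos (by positivity) _)
        (Real.rpow_le_rpow (by positivity) hlow hc0.le)
    have hts : t ^ s ≤ (1 + t) ^ s := Real.rpow_le_rpow ht0 (by linarith) hs0
    have hcd : cauchyDensity d η x = A * η * (t ^ 2 + η ^ 2) ^ (-c) := rfl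
    calc t ^ s * cauchyDensity d η x
        = t ^ s * (A * η * (t ^ 2 + η ^ 2) ^ (-c)) := by rw [hcd]
      _ ≤ (1 + t) ^ s * (A * η * ((m/2)^(-c) * (1+t)^(-(2*c)))) := by
          refine mul_le_mul hts ?_ (by positivity) (by positivity)
          exact mul_le_mul_of_nonneg_left hbound (by positivity)
      _ = C * (1 + t) ^ (-((d:ℝ) + 1 - s)) := by
          rw [hC_def, show -((d:ℝ) + 1 - s) = s + (-(2*c)) by rw [hc_def]; ring,
            Real.rpow_add h1t]
          ring
  have hint : Integrable (fun x : EuclideanSpace ℝ (Fin d) => C * (1 + ‖x‖) ^ (-((d:ℝ) + 1 - s))) := by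
    refine (integrable_one_add_norm ?_).const_mul C
    rw [finrank_euclideanSpace_fin]
    linarith
  refine hint.mono' ?_ (Filter.Eventually.of_forall fun x => ?_)
  · refine Measurable.aestronglyMeasurable ?_
    unfold cauchyDensity
    fun_prop
  · rw [Real.norm_of_nonneg]
    · exact hkey x
    · have h1 : 0 < Real.Gamma (((d : ℝ) + 1) / 2) := Real.Gamma_pos_of_pos (by positivity)
      unfold cauchyDensity
      positivity

theorem cauchy_rejection_bound (d : ℕ) (hd : 1 ≤ d) (β L η : ℝ)
    (hβ : β ∈ Set.Ioo (0 : ℝ) 1) (hL : 0 < L) (hη : 0 < η)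
    (V : EuclideanSpace ℝ (Fin d) → ℝ) (hVmeas : Measurable V)
    (xstar : EuclideanSpace ℝ (Fin d)) (hmin : ∀ x, V xstar ≤ V x)
    (hV : ∀ x, V x - V xstar ≤ L * ‖x - xstar‖ ^ β) :
    ∀ y : EuclideanSpace ℝ (Fin d),
      (∫ x, (V (x + y) - V xstar) * cauchyDensity d η x) ≤
        L * ‖y - xstar‖ ^ β +
          (Real.Gamma (((d : ℝ) + 1) / 2) * Real.Gamma ((1 - β) / 2) /
            (Real.Gamma (((d : ℝ) + 1 - β) / 2) * Real.sqrt Real.pi)) * L * η ^ β := by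
  intro y
  obtain ⟨hβ0, hβ1⟩ := hβ
  have hd1 : (1:ℝ) ≤ (d:ℝ) := by exact_mod_cast hd
  -- positivity facts about Gamma values
  have gA : 0 < Real.Gamma (((d:ℝ) + 1) / 2) := Real.Gamma_pos_of_pos (by linarith)
  have gB : 0 < Real.Gamma ((1 - β) / 2) := Real.Gamma_pos_of_pos (by linarith)
  have gC : 0 < Real.Gamma (((d:ℝ) + 1 - β) / 2) := Real.Gamma_pos_of_pos (by linarith)
  have gD : 0 < Real.Gamma ((d:ℝ) / 2) := Real.Gamma_pos_of_pos (by linarith)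
  have gE : 0 < Real.Gamma (((d:ℝ) + β) / 2) := Real.Gamma_pos_of_pos (by linarith)
  have hsπ : (0:ℝ) < Real.sqrt π := Real.sqrt_pos.2 pi_pos
  have hRHSc : 0 ≤ (Real.Gamma (((d : ℝ) + 1) / 2) * Real.Gamma ((1 - β) / 2) /
      (Real.Gamma (((d : ℝ) + 1 - β) / 2) * Real.sqrt Real.pi)) * L * η ^ β := by positivity
  by_cases hint : Integrable (fun x : EuclideanSpace ℝ (Fin d) =>
      (V (x + y) - V xstar) * cauchyDensity d η x)
  swap
  · rw [integral_undef hint]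
    have : 0 ≤ L * ‖y - xstar‖ ^ β := by positivity
    linarith
  · have hintβ := moment_integrable d hd β η hβ0.le hβ1 hη
    have hintp : Integrable (cauchyDensity d η) := by
      have := moment_integrable d hd 0 η le_rfl one_pos hη
      simpa using this
    have hint0 : ∫ x : EuclideanSpace ℝ (Fin d), cauchyDensity d η x = 1 := by
      have h := moment_eq d hd 0 η le_rfl one_pos hη
      simp only [Real.rpow_zero, one_mul, add_zero, sub_zero, mul_one] at h
      rw [h, Real.Gamma_one_half_eq]
      have gD : 0 < Real.Gamma ((d:ℝ) / 2) := Real.Gamma_pos_of_pos (by positivity)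
      have hsπ : (0:ℝ) < Real.sqrt π := Real.sqrt_pos.2 pi_pos
      field_simp
    have hMβ := moment_eq d hd β η hβ0.le hβ1 hη
    -- pointwise bound
    have hpt : ∀ x : EuclideanSpace ℝ (Fin d),
        (V (x + y) - V xstar) * cauchyDensity d η x ≤
          L * (‖x‖ ^ β * cauchyDensity d η x) +
            (L * ‖y - xstar‖ ^ β) * cauchyDensity d η x := by
      intro x
      have hp0 := cauchyDensity_nonneg d η hη x
      have h1 : V (x + y) - V xstar ≤ L * (‖x‖ ^ β + ‖y - xstar‖ ^ β) := by
        refine (hV (x + y)).trans ?_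
        have hn : ‖x + y - xstar‖ ≤ ‖x‖ + ‖y - xstar‖ := by
          rw [add_sub_assoc]; exact norm_add_le _ _
        have h2 : ‖x + y - xstar‖ ^ β ≤ (‖x‖ + ‖y - xstar‖) ^ β :=
          Real.rpow_le_rpow (norm_nonneg _) hn hβ0.le
        have h3 : (‖x‖ + ‖y - xstar‖) ^ β ≤ ‖x‖ ^ β + ‖y - xstar‖ ^ β :=
          rpow_add_le' _ _ _ (norm_nonneg _) (norm_nonneg _) hβ0.le hβ1.le
        have := h2.trans h3
        exact mul_le_mul_of_nonneg_left this hL.le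
      calc (V (x + y) - V xstar) * cauchyDensity d η x
          ≤ (L * (‖x‖ ^ β + ‖y - xstar‖ ^ β)) * cauchyDensity d η x :=
            mul_le_mul_of_nonneg_right h1 hp0
        _ = L * (‖x‖ ^ β * cauchyDensity d η x) +
            (L * ‖y - xstar‖ ^ β) * cauchyDensity d η x := by ring
    have hg_int : Integrable (fun x : EuclideanSpace ℝ (Fin d) =>
        L * (‖x‖ ^ β * cauchyDensity d η x) +
          (L * ‖y - xstar‖ ^ β) * cauchyDensity d η x) :=
      (hintβ.const_mul L).add (hintp.const_mul _)
    have hmono := integral_mono hint hg_int hpt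
    rw [integral_add (hintβ.const_mul L) (hintp.const_mul _),
      MeasureTheory.integral_const_mul, MeasureTheory.integral_const_mul, hMβ, hint0,
      mul_one] at hmono
    refine hmono.trans ?_
    -- compare constants via log-convexity
    have hprod := gamma_prod_le ((d:ℝ)/2) β (by linarith) hβ0.le hβ1.le
    rw [show (d:ℝ)/2 + β/2 = ((d:ℝ) + β)/2 by ring,
      show (d:ℝ)/2 + 1/2 - β/2 = ((d:ℝ) + 1 - β)/2 by ring,
      show (d:ℝ)/2 + 1/2 = ((d:ℝ) + 1)/2 by ring] at hprod
    have hCC : Real.Gamma (((d:ℝ) + β) / 2) * Real.Gamma ((1 - β) / 2) /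
        (Real.Gamma ((d:ℝ) / 2) * Real.sqrt π) ≤
        Real.Gamma (((d:ℝ) + 1) / 2) * Real.Gamma ((1 - β) / 2) /
          (Real.Gamma (((d:ℝ) + 1 - β) / 2) * Real.sqrt π) := by
      rw [div_le_div_iff₀ (by positivity) (by positivity)]
      nlinarith [mul_le_mul_of_nonneg_right hprod (mul_nonneg gB.le hsπ.le)]
    have hfin : L * (Real.Gamma (((d:ℝ) + β) / 2) * Real.Gamma ((1 - β) / 2) /
        (Real.Gamma ((d:ℝ) / 2) * Real.sqrt π) * η ^ β) ≤
        (Real.Gamma (((d : ℝ) + 1) / 2) * Real.Gamma ((1 - β) / 2) /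
          (Real.Gamma (((d : ℝ) + 1 - β) / 2) * Real.sqrt Real.pi)) * L * η ^ β := by
      have hηβ : (0:ℝ) ≤ η ^ β := Real.rpow_nonneg hη.le β
      nlinarith [mul_le_mul_of_nonneg_right hCC (mul_nonneg hL.le hηβ)]
    linarith
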